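/- arXiv:2409.01869 — 2 statements merged into one kernel-verified Lean document; each statement's English description precedes it below -/
import Mathlib

section
/- If Ḡ contains a directed path from (s,1) to (t,2) that visits all 2·|V| vertices of V × {1,2} (each exactly once), then G contains a Hamiltonian s-t path; concretely, such a path in Ḡ has the form (v₁,1),(v₁,2),(v₂,1),(v₂,2),…,(v_{|V|},1),(v_{|V|},2) with v₁ = s and v_{|V|} = t, and the sequence v₁, v₂, …, v_{|V|} is a Hamiltonian s-t path in G. -/
/-- The directed graph Ḡ on `V × Bool` (`false` = first copy, `true` = second copy):
edges `(v,1) → (v,2)` for every `v`, and `(i,2) → (j,1)` whenever `{i,j} ∈ E`. -/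
def DbarAdj {V : Type*} (G : SimpleGraph V) : V × Bool → V × Bool → Prop :=
  fun a b =>
    (a.2 = false ∧ b.2 = true ∧ b.1 = a.1) ∨
    (a.2 = true ∧ b.2 = false ∧ G.Adj a.1 b.1)

/-- The sequence `(v₁,1),(v₁,2),(v₂,1),(v₂,2),…` obtained from `v₁,v₂,…`. -/
def doubleList {V : Type*} (vs : List V) : List (V × Bool) :=
  (vs.map fun v => [(v, false), (v, true)]).flatten

lemma doubleList_nil {V : Type*} : doubleList ([] : List V) = [] := rfl

lemma doubleList_cons {V : Type*} (v : V) (vs : List V) :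
    doubleList (v :: vs) = (v, false) :: (v, true) :: doubleList vs := rfl

lemma mem_doubleList {V : Type*} (v : V) (b : Bool) (vs : List V) :
    (v, b) ∈ doubleList vs ↔ v ∈ vs := by
  induction vs with
  | nil => simp [doubleList_nil]
  | cons w ws ih => cases b <;> simp [doubleList_cons, ih, Prod.ext_iff] <;> tauto

lemma nodup_of_doubleList {V : Type*} (vs : List V) (h : (doubleList vs).Nodup) :
    vs.Nodup := by
  induction vs with
  | nil => simp
  | cons w ws ih =>
    rw [doubleList_cons] at h
    simp only [List.nodup_cons] at h ⊢
    exact ⟨fun hm => h.1 (by simp [mem_doubleList w false ws, hm]), ih h.2.2⟩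

lemma getLast?_doubleList {V : Type*} (vs : List V) :
    (doubleList vs).getLast? = vs.getLast?.map (fun v => (v, true)) := by
  induction vs with
  | nil => simp [doubleList_nil]
  | cons w ws ih =>
    cases ws with
    | nil => simp [doubleList_cons, doubleList_nil]
    | cons u us =>
      rw [doubleList_cons, List.getLast?_cons_cons,
        show doubleList (u :: us) = (u, false) :: (u, true) :: doubleList us from rfl,
        List.getLast?_cons_cons, ← doubleList_cons, ih, List.getLast?_cons_cons]

lemma key {V : Type*} (G : SimpleGraph V) :
    ∀ n (l : List (V × Bool)) (v : V), l.length ≤ n →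
      l.Chain' (DbarAdj G) → l.head? = some (v, false) →
      l.getLast?.map Prod.snd = some true →
      ∃ vs : List V, l = doubleList vs ∧ vs.head? = some v ∧ vs.Chain' G.Adj := by
  intro n
  induction n with
  | zero =>
    intro l v hlen _ hhead _
    rw [List.length_eq_zero_iff.mp (Nat.le_zero.mp hlen)] at hhead
    simp at hhead
  | succ n ih =>
    intro l v hlen hchain hhead hlast
    match l with
    | [] => simp at hhead
    | a :: rest =>
      simp only [List.head?_cons, Option.some.injEq] at hhead
      subst hhead
      match rest with
      | [] => simp at hlast
      | b :: rest2 =>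
        rw [List.Chain', List.isChain_cons_cons] at hchain
        obtain ⟨hab, hchain2⟩ := hchain
        have hb : b = (v, true) := by
          rcases hab with ⟨_, h2, h3⟩ | ⟨h1, _, _⟩
          · exact Prod.ext h3 h2
          · simp at h1
        subst hb
        match rest2 with
        | [] =>
          exact ⟨[v], rfl, rfl, List.isChain_singleton v⟩
        | c :: rest3 =>
          rw [List.isChain_cons_cons] at hchain2
          obtain ⟨hbc, hchain3⟩ := hchain2
          have hc : c.2 = false ∧ G.Adj v c.1 := by
            rcases hbc with ⟨h1, _, _⟩ | ⟨_, h2, h3⟩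
            · simp at h1
            · exact ⟨h2, h3⟩
          have hlen2 : (c :: rest3).length ≤ n := by
            simp only [List.length_cons] at hlen ⊢; omega
          have hlast2 : (c :: rest3).getLast?.map Prod.snd = some true := by
            rw [List.getLast?_cons_cons, List.getLast?_cons_cons] at hlast
            exact hlast
          have hhead2 : (c :: rest3).head? = some (c.1, false) := by
            simp [Prod.ext_iff, hc.1]
          obtain ⟨vs', heq, hhd, hch⟩ := ih (c :: rest3) c.1 hlen2 hchain3 hhead2 hlast2
          refine ⟨v :: vs', ?_, rfl, ?_⟩
          · rw [doubleList_cons, heq]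
          · exact List.isChain_cons.mpr ⟨fun y hy => by rw [hhd] at hy; cases hy; exact hc.2, hch⟩

/-- If `Ḡ` contains a directed path from `(s,1)` to `(t,2)` visiting every vertex of
`V × {1,2}` exactly once, then it has the form
`(v₁,1),(v₁,2),(v₂,1),(v₂,2),…,(v_{|V|},1),(v_{|V|},2)` with `v₁ = s`, `v_{|V|} = t`,
and `v₁,…,v_{|V|}` is a Hamiltonian `s`-`t` path in `G`. -/
theorem stmt1 {V : Type*} [Fintype V] [DecidableEq V] (G : SimpleGraph V)
    (s t : V) (hst : s ≠ t) (l : List (V × Bool))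
    (hchain : l.Chain' (DbarAdj G)) (hnodup : l.Nodup)
    (hhead : l.head? = some (s, false)) (hlast : l.getLast? = some (t, true))
    (hall : ∀ x : V × Bool, x ∈ l) :
    ∃ vs : List V, l = doubleList vs ∧ vs.head? = some s ∧ vs.getLast? = some t ∧
      vs.Chain' G.Adj ∧ vs.Nodup ∧ (∀ v : V, v ∈ vs) := by
  obtain ⟨vs, heq, hhd, hch⟩ := key G l.length l s le_rfl hchain hhead (by rw [hlast]; rfl)
  subst heq
  refine ⟨vs, rfl, hhd, ?_, hch, nodup_of_doubleList vs hnodup, fun v =>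
    (mem_doubleList v false vs).mp (hall (v, false))⟩
  rw [getLast?_doubleList] at hlast
  cases h : vs.getLast? with
  | none => rw [h] at hlast; simp at hlast
  | some w => rw [h] at hlast; simp only [Option.map_some, Option.some.injEq, Prod.mk.injEq] at hlast; rw [hlast.1]
end

section
/- (Correctness of the reduction in Theorem 1.) G contains a Hamiltonian s-t path if and only if Ḡ contains a directed Hamiltonian path from (s,1) to (t,2), i.e., a directed path from (s,1) to (t,2) visiting every vertex of V × {1,2} exactly once (equivalently, a directed path from (s,1) to (t,2) whose sequence of 2·|V| visited vertices alternates between the copy V×{1} and the copy V×{2}, starting in V×{1}). -/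
@[simp] theorem List.chain'_nil {α : Type*} {R : α → α → Prop} : List.Chain' R [] :=
  List.isChain_nil

@[simp] theorem List.chain'_singleton {α : Type*} {R : α → α → Prop} (a : α) :
    List.Chain' R [a] :=
  List.isChain_singleton a

@[simp] theorem List.chain'_cons {α : Type*} {R : α → α → Prop} {x y : α} {l : List α} :
    List.Chain' R (x :: y :: l) ↔ R x y ∧ List.Chain' R (y :: l) :=
  List.isChain_cons_cons

private def fB {V : Type*} (v : V) : List (V × Bool) := [(v, false), (v, true)]

lemma mem_flatB {V : Type*} (vs : List V) (x : V × Bool) :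
    x ∈ vs.flatMap fB ↔ x.1 ∈ vs := by
  induction vs with
  | nil => simp
  | cons v tl ih =>
    obtain ⟨a, b⟩ := x
    simp [fB, ih] at *
    cases b <;> simp

lemma getLast_flatB {V : Type*} (vs : List V) :
    (vs.flatMap fB).getLast? = vs.getLast?.map (fun v => (v, true)) := by
  induction vs with
  | nil => simp
  | cons v tl ih =>
    cases tl with
    | nil => simp [fB]
    | cons w tl' =>
      rw [List.flatMap_cons]
      rw [List.getLast?_append]
      simp only [List.getLast?_cons_cons]
      rw [ih]
      cases h : (w :: tl').getLast? with
      | none => simp at h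
      | some p => simp

lemma chain_flatB {V : Type*} (G : SimpleGraph V) (vs : List V) (h : vs.Chain' G.Adj) :
    (vs.flatMap fB).Chain' (DbarAdj G) := by
  induction vs with
  | nil => simp
  | cons v tl ih =>
    cases tl with
    | nil => simp [fB, DbarAdj]
    | cons w tl' =>
      rw [List.chain'_cons] at h
      have hrest := ih h.2
      have key : (v :: w :: tl').flatMap fB
          = (v, false) :: (v, true) :: ((w :: tl').flatMap fB) := by simp [fB]
      have key2 : (w :: tl').flatMap fB
          = (w, false) :: (w, true) :: (tl'.flatMap fB) := by simp [fB]
      rw [key, key2, List.chain'_cons, List.chain'_cons]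
      rw [key2] at hrest
      exact ⟨Or.inl ⟨rfl, rfl, rfl⟩, Or.inr ⟨rfl, rfl, h.1⟩, hrest⟩

lemma sublist_flatB {V : Type*} (vs : List V) :
    List.Sublist (vs.map (fun v => (v, false))) (vs.flatMap fB) := by
  induction vs with
  | nil => simp
  | cons v tl ih =>
    rw [List.flatMap_cons, List.map_cons]
    exact ((ih.cons _).cons₂ _)

lemma nodup_flatB {V : Type*} (vs : List V) (h : vs.Nodup) :
    (vs.flatMap fB).Nodup := by
  induction vs with
  | nil => simp
  | cons v tl ih =>
    rw [List.nodup_cons] at h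
    have key : (v :: tl).flatMap fB = (v, false) :: (v, true) :: tl.flatMap fB := by simp [fB]
    rw [key, List.nodup_cons, List.nodup_cons]
    refine ⟨?_, ?_, ih h.2⟩
    · intro hx
      rcases List.mem_cons.mp hx with h1 | h1
      · exact Bool.noConfusion (congrArg Prod.snd h1)
      · exact h.1 ((mem_flatB tl _).mp h1)
    · intro hx
      exact h.1 ((mem_flatB tl _).mp hx)

lemma decomp_aux {V : Type*} (G : SimpleGraph V) (n : ℕ) :
    ∀ l : List (V × Bool), l.length ≤ n → l.Chain' (DbarAdj G) →
    ∀ v : V, l.head? = some (v, false) →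
    (∃ p, l.getLast? = some (p, true)) →
    ∃ vs : List V, l = vs.flatMap fB ∧ vs.head? = some v ∧ vs.Chain' G.Adj := by
  induction n with
  | zero =>
    intro l hlen _ v hh _
    rcases l with _ | ⟨x, rest⟩
    · simp at hh
    · simp at hlen
  | succ n IH =>
    intro l hlen hc v hh hlast
    rcases l with _ | ⟨⟨a, b⟩, rest⟩
    · simp at hh
    · simp only [List.head?_cons, Option.some.injEq, Prod.mk.injEq] at hh
      obtain ⟨rfl, rfl⟩ := hh
      rcases rest with _ | ⟨c, rest'⟩
      · obtain ⟨p, hp⟩ := hlast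
        simp at hp
      · rw [List.chain'_cons] at hc
        have hd : c = (a, true) := by
          rcases hc.1 with ⟨_, h2, h3⟩ | ⟨h1, _, _⟩
          · obtain ⟨c1, c2⟩ := c; simp at h2 h3; simp [h2, h3]
          · simp at h1
        subst hd
        rcases rest' with _ | ⟨d, rest''⟩
        · exact ⟨[a], by simp [fB], rfl, List.chain'_singleton a⟩
        · have hthis := List.chain'_cons.mp hc.2
          have hd2 : d.2 = false ∧ G.Adj a d.1 := by
            rcases hthis.1 with ⟨h1, _, _⟩ | ⟨_, h2, h3⟩
            · simp at h1
            · exact ⟨h2, h3⟩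
          obtain ⟨p, hp⟩ := hlast
          have hlast' : (d :: rest'').getLast? = some (p, true) := by
            rw [List.getLast?_cons_cons, List.getLast?_cons_cons] at hp
            exact hp
          have hlen' : (d :: rest'').length ≤ n := by
            simp at hlen ⊢; omega
          obtain ⟨vs', h1, h2, h3⟩ := IH (d :: rest'') hlen'
            hthis.2 d.1
            (by obtain ⟨d1, d2⟩ := d; simp at hd2 ⊢; exact hd2.1.symm ▸ rfl)
            ⟨p, hlast'⟩
          refine ⟨a :: vs', ?_, rfl, ?_⟩
          · rw [List.flatMap_cons, ← h1]; rfl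
          · cases vs' with
            | nil => simp at h2
            | cons u tl =>
              simp at h2
              subst h2
              exact List.chain'_cons.mpr ⟨hd2.2, h3⟩

lemma decomp {V : Type*} (G : SimpleGraph V)
    (l : List (V × Bool)) (hc : l.Chain' (DbarAdj G))
    (v : V) (hh : l.head? = some (v, false))
    (hlast : ∃ p, l.getLast? = some (p, true)) :
    ∃ vs : List V, l = vs.flatMap fB ∧ vs.head? = some v ∧ vs.Chain' G.Adj :=
  decomp_aux G l.length l le_rfl hc v hh hlast

/-- Correctness of the reduction: `G` contains a Hamiltonian `s`-`t` path if and only if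
`Ḡ` contains a directed Hamiltonian path from `(s,1)` to `(t,2)`, i.e., a directed path
(consecutive pairs are edges of `Ḡ`, vertices pairwise distinct) from `(s,1)` to `(t,2)`
visiting every vertex of `V × {1,2}` exactly once. -/
theorem stmt3 {V : Type*} [Fintype V] [DecidableEq V] (G : SimpleGraph V)
    (s t : V) (hst : s ≠ t) :
    (∃ vs : List V, vs.Chain' G.Adj ∧ vs.Nodup ∧
        vs.head? = some s ∧ vs.getLast? = some t ∧ (∀ v : V, v ∈ vs)) ↔
    (∃ l : List (V × Bool), l.Chain' (DbarAdj G) ∧ l.Nodup ∧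
        l.head? = some (s, false) ∧ l.getLast? = some (t, true) ∧
        (∀ x : V × Bool, x ∈ l)) := by
  constructor
  · rintro ⟨vs, hc, hn, hh, hl, hm⟩
    refine ⟨vs.flatMap fB, chain_flatB G vs hc, nodup_flatB vs hn, ?_, ?_, ?_⟩
    · cases vs with
      | nil => simp at hh
      | cons a tl => simp at hh; subst hh; simp [fB]
    · rw [getLast_flatB, hl]; rfl
    · intro x; rw [mem_flatB]; exact hm x.1
  · rintro ⟨l, hc, hn, hh, hl, hm⟩
    obtain ⟨vs, rfl, hvh, hvc⟩ := decomp G l hc s hh ⟨t, hl⟩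
    refine ⟨vs, hvc, ?_, hvh, ?_, ?_⟩
    · have := (sublist_flatB vs).nodup hn
      exact (List.nodup_map_iff (fun a b h => by simpa using h)).mp this
    · rw [getLast_flatB] at hl
      cases h : vs.getLast? with
      | none => rw [h] at hl; simp at hl
      | some p => rw [h] at hl; simp at hl; simp [hl]
    · intro v
      have := hm (v, false)
      rwa [mem_flatB] at this
end
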